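/- Let β be a quadratic Pisot unit, root of x² - ax - 1 with a ∈ Z_{>0}, and α = -β^{-1} its conjugate. If x ∈ Z[β] with x > 0, then the conjugate x' has a unique weakly admissible α-adic expansion, and this expansion is finite, equal digit-by-digit to the β-expansion of x. -/

import Mathlib

/-- A weakly admissible α-adic expansion of y over the alphabet {0,…,a}:
digits in {0,…,a}, finitely many nonzero digits of negative index, no finite
factor lexicographically greater than d*_β(1) = (a0)^ω (equivalently a digit a
is always followed on the right by 0), with α-value y. -/
def IsAlphaAdicExpansion (a : ℕ) (α : ℝ) (f : ℤ → ℤ) (y : ℝ) : Prop :=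
  (∀ i, 0 ≤ f i ∧ f i ≤ a) ∧
  (∃ k : ℤ, ∀ i, i < k → f i = 0) ∧
  (∀ i, f (i + 1) = a → f i = 0) ∧
  HasSum (fun i : ℤ => (f i : ℝ) * α ^ i) y

namespace AlphaAdicAux

/-- Collected facts about the quadratic Pisot unit `β` and its conjugate `α`. -/
structure Facts (a : ℕ) (β α : ℝ) : Prop where
  ha : 0 < a
  root : β ^ 2 = (a : ℝ) * β + 1
  bpos : 0 < β
  hαβ : α * β = -1
  hab : α + β = (a : ℝ)
  b_gt_a : (a : ℝ) < β
  b_gt_1 : 1 < β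
  aneg : α < 0
  agt : -1 < α
  aroot : α ^ 2 = (a : ℝ) * α + 1
  irr : Irrational β

variable {a : ℕ} {β α : ℝ}

theorem Facts.ane (F : Facts a β α) : α ≠ 0 := ne_of_lt F.aneg

theorem Facts.bne (F : Facts a β α) : β ≠ 0 := ne_of_gt F.bpos

theorem Facts.ha1 (F : Facts a β α) : (1 : ℝ) ≤ (a : ℝ) := by exact_mod_cast F.ha

theorem facts_mk (a : ℕ) (ha : 0 < a) (β α : ℝ) (hβroot : β ^ 2 = (a : ℝ) * β + 1)
    (hβpos : 0 < β) (hα : α = -β⁻¹) : Facts a β α := by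
  have ha1 : (1 : ℝ) ≤ (a : ℝ) := by exact_mod_cast ha
  have hbne : β ≠ 0 := ne_of_gt hβpos
  have hinv : β⁻¹ = β - a := by
    rw [eq_sub_iff_add_eq, ← eq_sub_iff_add_eq']
    field_simp
    nlinarith [hβroot]
  have hba : (a : ℝ) < β := by
    have h0 : 0 < β⁻¹ := inv_pos.mpr hβpos
    rw [hinv] at h0; linarith
  have hb1 : 1 < β := lt_of_le_of_lt ha1 hba
  have hαβ : α * β = -1 := by rw [hα]; field_simp
  have hab : α + β = (a : ℝ) := by rw [hα, hinv]; ring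
  have haneg : α < 0 := by
    rw [hα]; have : 0 < β⁻¹ := inv_pos.mpr hβpos; linarith
  have hagt : -1 < α := by
    rw [hα]
    have h2 : 1 / β < 1 := (div_lt_one hβpos).mpr hb1
    rw [one_div] at h2; linarith
  have haroot : α ^ 2 = (a : ℝ) * α + 1 := by
    have hαa : α = (a : ℝ) - β := by linarith
    rw [hαa]; nlinarith [hβroot]
  have hirr : Irrational β := by
    have hs : (2 * β - (a : ℝ)) ^ 2 = ((a ^ 2 + 4 : ℤ) : ℝ) := by
      push_cast; nlinarith [hβroot]
    have hnotint : ¬∃ y : ℤ, (2 * β - (a : ℝ)) = y := by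
      rintro ⟨y, hy⟩
      have hy2 : ((y : ℝ)) ^ 2 = ((a ^ 2 + 4 : ℤ) : ℝ) := by rw [← hy]; exact hs
      have hyz : y ^ 2 = (a : ℤ) ^ 2 + 4 := by exact_mod_cast hy2
      have hypos : (a : ℝ) < (y : ℝ) := by rw [← hy]; linarith
      have hya : (a : ℤ) < y := by exact_mod_cast hypos
      have ha' : (1 : ℤ) ≤ (a : ℤ) := by exact_mod_cast ha
      have hcase : y = (a : ℤ) + 1 ∨ (a : ℤ) + 2 ≤ y := by omega
      rcases hcase with hcase | hcase
      · subst hcase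
        have h8 : 2 * (a : ℤ) + 1 = 4 := by linear_combination hyz
        omega
      · nlinarith [hyz, mul_le_mul hcase hcase (by linarith) (by linarith)]
    have hirr2 : Irrational (2 * β - (a : ℝ)) :=
      irrational_nrt_of_notint_nrt 2 (a ^ 2 + 4) hs hnotint two_pos
    have h4 := hirr2.add_natCast a
    have h5 : (2 * β - (a : ℝ)) + (a : ℕ) = 2 * β := by push_cast; ring
    rw [h5] at h4
    have h6 := h4.div_natCast (m := 2) (by norm_num)
    have h7 : (2 * β) / ((2 : ℕ) : ℝ) = β := by push_cast; ring
    rwa [h7] at h6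
  exact ⟨ha, hβroot, hβpos, hαβ, hab, hba, hb1, haneg, hagt, haroot, hirr⟩

theorem Facts.indep_b (F : Facts a β α) {p q : ℤ} (h : (p : ℝ) + q * β = 0) :
    p = 0 ∧ q = 0 := by
  by_cases hq : q = 0
  · subst hq
    simp only [Int.cast_zero, zero_mul, add_zero] at h
    exact ⟨by exact_mod_cast h, rfl⟩
  · exfalso
    have hq' : ((q : ℝ)) ≠ 0 := Int.cast_ne_zero.mpr hq
    refine F.irr ⟨(-p : ℚ) / (q : ℚ), ?_⟩
    push_cast
    field_simp
    linarith

theorem Facts.indep_a (F : Facts a β α) {p q : ℤ} (h : (p : ℝ) + q * α = 0) :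
    p = 0 ∧ q = 0 := by
  have hαa : α = (a : ℝ) - β := by linarith [F.hab]
  have h2 : ((p + q * a : ℤ) : ℝ) + (-q : ℤ) * β = 0 := by
    push_cast
    rw [hαa] at h
    linarith
  obtain ⟨h3, h4⟩ := F.indep_b h2
  have hq0 : q = 0 := by omega
  subst hq0
  simp only [zero_mul, add_zero] at h3
  exact ⟨h3, rfl⟩

/-! ### The digit algorithm on pairs -/

/-- value of the pair `p` as an element `p.1 + p.2 γ` of `ℤ[γ]`. -/
noncomputable def pval (γ : ℝ) (p : ℤ × ℤ) : ℝ := (p.1 : ℝ) + (p.2 : ℝ) * γ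

/-- the chosen digit. -/
noncomputable def dig (α : ℝ) (p : ℤ × ℤ) : ℤ := max 0 (⌊pval α p + α⌋ + 1)

/-- one step of the algorithm: `x ↦ (x - digit)/β` on pairs. -/
noncomputable def stp (a : ℕ) (α : ℝ) (p : ℤ × ℤ) : ℤ × ℤ :=
  (p.2 - a * (p.1 - dig α p), p.1 - dig α p)

/-- multiplication by `β` on pairs. -/
def pmul (a : ℕ) (p : ℤ × ℤ) : ℤ × ℤ := (p.2, p.1 + a * p.2)

theorem pval_pair (γ : ℝ) (u v : ℤ) : pval γ (u, v) = (u : ℝ) + v * γ := rfl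

theorem pval_pmul {γ : ℝ} (hγ : γ ^ 2 = (a : ℝ) * γ + 1) (p : ℤ × ℤ) :
    pval γ (pmul a p) = γ * pval γ p := by
  simp only [pval, pmul]
  push_cast
  linear_combination (-(p.2 : ℝ)) * hγ

theorem pval_stp {γ : ℝ} (hγ : γ ^ 2 = (a : ℝ) * γ + 1) (p : ℤ × ℤ) :
    pval γ p = (dig α p : ℝ) + γ * pval γ (stp a α p) := by
  simp only [pval, stp]
  push_cast
  linear_combination ((dig α p : ℝ) - (p.1 : ℝ)) * hγ

theorem dig_nonneg (p : ℤ × ℤ) : 0 ≤ dig α p := le_max_left _ _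

theorem dig_le (F : Facts a β α) {p : ℤ × ℤ} (hc : pval α p < β) : dig α p ≤ a := by
  have h1 : ⌊pval α p + α⌋ < (a : ℤ) := by
    rw [Int.floor_lt]
    push_cast
    linarith [F.hab]
  refine max_le (by exact_mod_cast Nat.zero_le a) (by omega)

theorem dig_zero (F : Facts a β α) : dig α (0, 0) = 0 := by
  have h0 : pval α (0, 0) + α = α := by simp [pval]
  have h1 : ⌊α⌋ = -1 := by
    rw [Int.floor_eq_iff]
    constructor <;> push_cast <;> linarith [F.aneg, F.agt]
  unfold dig
  rw [h0, h1]
  simp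

theorem stp_zero (F : Facts a β α) : stp a α (0, 0) = (0, 0) := by
  unfold stp
  rw [dig_zero F]
  simp

theorem stp_cval (F : Facts a β α) (p : ℤ × ℤ) :
    pval α (stp a α p) = β * ((dig α p : ℝ) - pval α p) := by
  have h := pval_stp (α := α) F.aroot p
  linear_combination β * h + (pval α (stp a α p)) * F.hαβ

theorem stp_cval_bounds (F : Facts a β α) {p : ℤ × ℤ}
    (h2 : -1 < pval α p) (h3 : pval α p < β) :
    -1 < pval α (stp a α p) ∧ pval α (stp a α p) < β ∧
      (1 ≤ dig α p → pval α (stp a α p) ≤ β - 1) := by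
  have hc := stp_cval F p
  set c := pval α p with hcdef
  rcases le_or_gt (⌊c + α⌋ + 1) 0 with h | h
  · have hd : dig α p = 0 := by simp only [dig, ← hcdef]; omega
    have hfl : c + α < 0 := by
      have := Int.lt_floor_add_one (c + α)
      have h2 : ((⌊c + α⌋ : ℝ) + 1) ≤ 0 := by exact_mod_cast h
      linarith [Int.floor_le (c + α)]
    rw [hd] at hc
    have hαβ := F.hαβ
    refine ⟨?_, ?_, ?_⟩
    · -- -1 < -β c  ⇔  βc < 1 ⇔ c < -α (since -αβ = 1)
      rw [hc]
      push_cast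
      nlinarith [F.bpos]
    · rw [hc]
      push_cast
      nlinarith [F.bpos, h2]
    · intro h1; omega
  · have hd : dig α p = ⌊c + α⌋ + 1 := by
      simp only [dig, ← hcdef]; omega
    have hub : (dig α p : ℝ) ≤ c + α + 1 := by
      rw [hd]; push_cast; linarith [Int.floor_le (c + α)]
    have hlb : c + α < (dig α p : ℝ) := by
      rw [hd]; push_cast; linarith [Int.lt_floor_add_one (c + α)]
    have hαβ := F.hαβ
    refine ⟨?_, ?_, fun _ => ?_⟩
    · rw [hc]; nlinarith [F.bpos]
    · rw [hc]; nlinarith [F.bpos, F.b_gt_1]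
    · rw [hc]; nlinarith [F.bpos]

theorem dig_le_val (F : Facts a β α) {p : ℤ × ℤ} (h1 : 0 < pval β p)
    (h2 : -1 < pval α p) (h3 : pval α p < β) : (dig α p : ℝ) ≤ pval β p := by
  by_contra hlt
  push_neg at hlt
  set d := dig α p with hddef
  have hd1 : 1 ≤ d := by
    rcases lt_or_ge 0 d with h | h
    · omega
    · have : d = 0 := le_antisymm h (dig_nonneg p)
      rw [this] at hlt; push_cast at hlt; linarith
  have hd' : d = ⌊pval α p + α⌋ + 1 := by
    simp only [hddef, dig] at hd1 ⊢; omega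
  have hub : (d : ℝ) ≤ pval α p + α + 1 := by
    rw [hd']; push_cast; linarith [Int.floor_le (pval α p + α)]
  have hlb : pval α p + α < (d : ℝ) := by
    rw [hd']; push_cast; linarith [Int.lt_floor_add_one (pval α p + α)]
  have hda : d ≤ (a : ℤ) := dig_le F h3
  -- the element y = d - x
  set Y1 : ℤ := d - p.1 with hY1
  set Y2 : ℤ := -p.2 with hY2
  have hvβ : (Y1 : ℝ) + Y2 * β = (d : ℝ) - pval β p := by
    simp only [hY1, hY2, pval]; push_cast; ring
  have hvα : (Y1 : ℝ) + Y2 * α = (d : ℝ) - pval α p := by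
    simp only [hY1, hY2, pval]; push_cast; ring
  have hyβpos : 0 < (Y1 : ℝ) + Y2 * β := by rw [hvβ]; linarith
  have hyβle : (Y1 : ℝ) + Y2 * β < (a : ℝ) := by
    rw [hvβ]
    have : (d : ℝ) ≤ (a : ℝ) := by exact_mod_cast hda
    linarith
  have hyαlb : -1 < (Y1 : ℝ) + Y2 * α := by rw [hvα]; linarith [F.agt]
  have hyαub : (Y1 : ℝ) + Y2 * α < 1 := by rw [hvα]; linarith [F.aneg]
  -- case analysis on Y2
  have hcases : Y2 ≤ -1 ∨ Y2 = 0 ∨ Y2 = 1 ∨ 2 ≤ Y2 := by omega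
  have hβα : 1 < β - α := by linarith [F.b_gt_1, F.aneg]
  rcases hcases with h | h | h | h
  · -- Y2 ≤ -1 : (Y1+Y2β) - (Y1+Y2α) = Y2(β-α) ≤ -(β-α) < -1, but > 0 - 1
    have h1 : (Y2 : ℝ) ≤ -1 := by exact_mod_cast h
    nlinarith
  · rw [h] at hyβpos hyαub
    norm_num at hyβpos hyαub
    have h1 : 0 < Y1 := by exact_mod_cast hyβpos
    have h3 : Y1 < 1 := by exact_mod_cast hyαub
    omega
  · rw [h] at hyβle hyαlb
    push_cast at hyβle hyαlb
    have h1 : (Y1 : ℝ) < 0 := by linarith [F.b_gt_a]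
    have h2 : Y1 < 0 := by exact_mod_cast h1
    have h2' : Y1 ≤ -1 := by omega
    have h3 : (Y1 : ℝ) ≤ -1 := by exact_mod_cast h2'
    linarith [F.aneg]
  · have h1 : (2 : ℝ) ≤ (Y2 : ℝ) := by exact_mod_cast h
    have h2 : (2 : ℝ) * (β - α) ≤ (Y2 : ℝ) * (β - α) := by nlinarith
    have h3 : (a : ℝ) + 1 ≤ 2 * β := by nlinarith [F.b_gt_a, F.ha1]
    nlinarith [F.aneg]

theorem pval_eq_zero (F : Facts a β α) {p : ℤ × ℤ} (h : pval β p = 0) : p = (0, 0) := by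
  obtain ⟨h1, h2⟩ := F.indep_b (p := p.1) (q := p.2) h
  exact Prod.ext h1 h2

/-- a good state: positive value, conjugate in `(-1, β)`. -/
def Good (β α : ℝ) (p : ℤ × ℤ) : Prop :=
  0 < pval β p ∧ -1 < pval α p ∧ pval α p < β

theorem stp_good (F : Facts a β α) {p : ℤ × ℤ} (hp : Good β α p) :
    Good β α (stp a α p) ∨ stp a α p = (0, 0) := by
  obtain ⟨h1, h2, h3⟩ := hp
  have hb := pval_stp (α := α) (γ := β) F.root p
  have hdle := dig_le_val F h1 h2 h3
  have hnn : 0 ≤ pval β (stp a α p) := by nlinarith [F.bpos]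
  rcases eq_or_lt_of_le hnn with h0 | h0
  · exact Or.inr (pval_eq_zero F h0.symm)
  · obtain ⟨hb1, hb2, _⟩ := stp_cval_bounds F h2 h3
    exact Or.inl ⟨h0, hb1, hb2⟩

theorem pval_lb (F : Facts a β α) {p : ℤ × ℤ} (hp : p ≠ (0, 0))
    (h2 : -1 < pval α p) (h3 : pval α p < β) (hv : 0 ≤ pval β p) :
    1 < β * pval β p := by
  have key : pval β p * pval α p
      = ((p.1 * p.1 + a * p.1 * p.2 - p.2 * p.2 : ℤ) : ℝ) := by
    simp only [pval]; push_cast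
    linear_combination ((p.1 : ℝ) * p.2) * F.hab + ((p.2 : ℝ) * p.2) * F.hαβ
  set N : ℤ := p.1 * p.1 + a * p.1 * p.2 - p.2 * p.2 with hN
  have hN0 : N ≠ 0 := by
    intro h0
    rw [h0] at key
    push_cast at key
    rcases mul_eq_zero.mp key with h | h
    · exact hp (pval_eq_zero F h)
    · obtain ⟨e1, e2⟩ := F.indep_a (p := p.1) (q := p.2) h
      exact hp (Prod.ext e1 e2)
  have hN1 : (1 : ℝ) ≤ |(N : ℝ)| := by
    have := Int.one_le_abs hN0
    calc (1 : ℝ) ≤ ((|N| : ℤ) : ℝ) := by exact_mod_cast this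
    _ = |(N : ℝ)| := by push_cast; rfl
  have habs : |pval α p| < β := abs_lt.mpr ⟨by linarith [F.b_gt_1], h3⟩
  have h5 : |pval β p * pval α p| = pval β p * |pval α p| := by
    rw [abs_mul, abs_of_nonneg hv]
  have h6 : (1 : ℝ) ≤ pval β p * |pval α p| := by rw [← h5, key]; exact hN1
  nlinarith [abs_nonneg (pval α p)]

theorem adm_step (F : Facts a β α) {p : ℤ × ℤ} (hp : Good β α p)
    (hd : 1 ≤ dig α p) (hgz : Good β α (stp a α p) ∨ stp a α p = (0, 0))
    (hda : dig α (stp a α p) = a) : False := by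
  rcases hgz with hgood | hzero
  · obtain ⟨hb1, hb2, hb3⟩ := stp_cval_bounds F hp.2.1 hp.2.2
    have hub := hb3 hd
    -- from hda : digit of stp is a, get pval α (stp p) ≥ β - 1
    have ha1 : (1 : ℤ) ≤ (a : ℤ) := by exact_mod_cast F.ha
    have hfl : ⌊pval α (stp a α p) + α⌋ + 1 = (a : ℤ) := by
      simp only [dig] at hda; omega
    have hge : ((a : ℤ) - 1 : ℝ) ≤ pval α (stp a α p) + α := by
      have : ((a : ℤ) - 1) ≤ ⌊pval α (stp a α p) + α⌋ := by omega
      calc ((a : ℤ) - 1 : ℝ) ≤ (⌊pval α (stp a α p) + α⌋ : ℝ) := by exact_mod_cast this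
        _ ≤ pval α (stp a α p) + α := Int.floor_le _
    have heq : pval α (stp a α p) = β - 1 := by
      push_cast at hge
      have : (a : ℝ) - 1 - α = β - 1 := by linarith [F.hab]
      linarith
    -- then stp p = (a-1, -1), so pval β (stp p) = a - 1 - β < 0
    have hzero : (((stp a α p).1 - ((a : ℤ) - 1) : ℤ) : ℝ)
        + (((stp a α p).2 + 1 : ℤ) : ℝ) * α = 0 := by
      push_cast
      have hv : pval α (stp a α p) = ((stp a α p).1 : ℝ) + ((stp a α p).2 : ℝ) * α := rfl
      rw [hv] at heq
      linarith [F.hab]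
    obtain ⟨e1, e2⟩ := F.indep_a hzero
    have hvβ : pval β (stp a α p) = ((a : ℝ) - 1) - β := by
      have h1 : (stp a α p).1 = (a : ℤ) - 1 := by omega
      have h2 : (stp a α p).2 = -1 := by omega
      simp only [pval, h1, h2]; push_cast; ring
    have := hgood.1
    rw [hvβ] at this
    linarith [F.b_gt_a]
  · rw [hzero, dig_zero F] at hda
    have : (0 : ℤ) < a := by exact_mod_cast F.ha
    omega

/-! ### The word lemma -/

theorem sum_Ico_split (g : ℤ → ℝ) {l m r : ℤ} (h1 : l ≤ m) (h2 : m ≤ r) :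
    (∑ i ∈ Finset.Ico l r, g i)
      = (∑ i ∈ Finset.Ico l m, g i) + ∑ i ∈ Finset.Ico m r, g i := by
  rw [← Finset.Ico_union_Ico_eq_Ico h1 h2,
    Finset.sum_union (Finset.Ico_disjoint_Ico_consecutive l m r)]

theorem word_bound (F : Facts a β α) (f : ℤ → ℤ) (hd : ∀ i, 0 ≤ f i ∧ f i ≤ a)
    (hadm : ∀ i, f (i + 1) = a → f i = 0) :
    ∀ (N : ℕ) (j : ℤ), (∑ i ∈ Finset.Ico (j - N) j, (f i : ℝ) * β ^ i) < β ^ j := by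
  intro N
  induction N using Nat.strong_induction_on with
  | _ N ih =>
    intro j
    have hzj : (0 : ℝ) < β ^ j := zpow_pos F.bpos j
    have hzj1 : (0 : ℝ) < β ^ (j - 1) := zpow_pos F.bpos (j - 1)
    have hsplit : ∀ (l : ℤ), l ≤ j - 1 →
        (∑ i ∈ Finset.Ico l j, (f i : ℝ) * β ^ i)
          = (∑ i ∈ Finset.Ico l (j - 1), (f i : ℝ) * β ^ i) + (f (j - 1) : ℝ) * β ^ (j - 1) := by
      intro l hl
      have h1 : Finset.Ico (j - 1) j = {j - 1} := by
        ext x; simp only [Finset.mem_Ico, Finset.mem_singleton]; omega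
      rw [sum_Ico_split _ hl (by omega : j - 1 ≤ j), h1, Finset.sum_singleton]
    have hja : β ^ j = β * β ^ (j - 1) := by
      have h := zpow_add_one₀ F.bne (j - 1)
      rw [show j - 1 + 1 = j from by ring] at h
      rw [h]; ring
    have hfub : (f (j - 1) : ℝ) ≤ (a : ℝ) := by exact_mod_cast (hd (j - 1)).2
    have hfnn : (0 : ℝ) ≤ (f (j - 1) : ℝ) := by exact_mod_cast (hd (j - 1)).1
    match N with
    | 0 => simpa using hzj
    | 1 =>
      rw [show j - (1 : ℕ) = j - 1 by push_cast; ring, hsplit (j - 1) le_rfl]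
      simp only [Finset.Ico_self, Finset.sum_empty, zero_add]
      calc (f (j - 1) : ℝ) * β ^ (j - 1) ≤ (a : ℝ) * β ^ (j - 1) := by nlinarith
        _ < β * β ^ (j - 1) := by nlinarith [F.b_gt_a]
        _ = β ^ j := hja.symm
    | (N + 2) =>
      have hl : j - ((N : ℤ) + 2) ≤ j - 1 := by omega
      rw [show j - ((N + 2 : ℕ) : ℤ) = j - ((N : ℤ) + 2) by push_cast; ring, hsplit _ hl]
      rcases eq_or_lt_of_le (hd (j - 1)).2 with hfa | hfa
      · -- top digit equals a ; the next one below is 0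
        have hf0 : f (j - 2) = 0 := hadm (j - 2) (by rw [show j - 2 + 1 = j - 1 by ring]; omega)
        have hsplit2 : (∑ i ∈ Finset.Ico (j - ((N : ℤ) + 2)) (j - 1), (f i : ℝ) * β ^ i)
            = (∑ i ∈ Finset.Ico ((j - 2) - (N : ℤ)) (j - 2), (f i : ℝ) * β ^ i) := by
          have h2 : Finset.Ico (j - 2) (j - 1) = {j - 2} := by
            ext x; simp only [Finset.mem_Ico, Finset.mem_singleton]; omega
          rw [sum_Ico_split _ (by omega : j - ((N : ℤ) + 2) ≤ j - 2)
            (by omega : j - 2 ≤ j - 1), h2, Finset.sum_singleton, hf0]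
          simp [show ((j : ℤ) - 2) - (N : ℤ) = j - ((N : ℤ) + 2) by ring]
        rw [hsplit2]
        have ih2 := ih N (by omega) (j - 2)
        have hzj2 : (0 : ℝ) < β ^ (j - 2) := zpow_pos F.bpos (j - 2)
        have hfa' : (f (j - 1) : ℝ) = (a : ℝ) := by exact_mod_cast hfa
        have hj2 : β ^ j = (a : ℝ) * β ^ (j - 1) + β ^ (j - 2) := by
          have e1 : β ^ (j - 1) = β * β ^ (j - 2) := by
            have h := zpow_add_one₀ F.bne (j - 2)
            rw [show j - 2 + 1 = j - 1 from by ring] at h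
            rw [h]; ring
          have e2 : β ^ j = β ^ 2 * β ^ (j - 2) := by
            have h := zpow_add₀ F.bne 2 (j - 2)
            rw [show (2 : ℤ) + (j - 2) = j from by ring] at h
            rw [h]
            norm_cast
          rw [e2, e1, F.root]; ring
        rw [hfa', hj2]
        linarith
      · -- top digit < a
        have ih1 := ih (N + 1) (by omega) (j - 1)
        rw [show (j - 1) - ((N + 1 : ℕ) : ℤ) = j - ((N : ℤ) + 2) by push_cast; ring] at ih1
        have hfa' : (f (j - 1) : ℝ) ≤ (a : ℝ) - 1 := by
          have : f (j - 1) ≤ (a : ℤ) - 1 := by omega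
          calc (f (j - 1) : ℝ) ≤ ((a : ℤ) - 1 : ℤ) := by exact_mod_cast this
            _ = (a : ℝ) - 1 := by push_cast; ring
        have : ((a : ℝ) - 1) * β ^ (j - 1) + β ^ (j - 1) = (a : ℝ) * β ^ (j - 1) := by ring
        calc (∑ i ∈ Finset.Ico (j - ((N : ℤ) + 2)) (j - 1), (f i : ℝ) * β ^ i)
              + (f (j - 1) : ℝ) * β ^ (j - 1)
            < β ^ (j - 1) + ((a : ℝ) - 1) * β ^ (j - 1) := by nlinarith
          _ = (a : ℝ) * β ^ (j - 1) := by ring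
          _ < β * β ^ (j - 1) := by nlinarith [F.b_gt_a]
          _ = β ^ j := hja.symm

theorem word_bound' (F : Facts a β α) (f : ℤ → ℤ) (hd : ∀ i, 0 ≤ f i ∧ f i ≤ a)
    (hadm : ∀ i, f (i + 1) = a → f i = 0) (s : Finset ℤ) (hs : ∀ i ∉ s, f i = 0)
    (j : ℤ) : (∑ i ∈ s.filter (· < j), (f i : ℝ) * β ^ i) < β ^ j := by
  by_cases hne : s.Nonempty
  · set b := s.min' hne with hb
    set N : ℕ := (j - b).toNat with hN
    have hsub : s.filter (· < j) ⊆ Finset.Ico (j - N) j := by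
      intro i hi
      obtain ⟨his, hij⟩ := Finset.mem_filter.mp hi
      have hbi : b ≤ i := s.min'_le i his
      simp only [Finset.mem_Ico]
      constructor
      · have : (j - b : ℤ) ≤ N := Int.self_le_toNat _
        omega
      · exact hij
    have heq : (∑ i ∈ s.filter (· < j), (f i : ℝ) * β ^ i)
        = ∑ i ∈ Finset.Ico (j - N) j, (f i : ℝ) * β ^ i := by
      refine Finset.sum_subset hsub ?_
      intro x hx hx2
      have hxj : x < j := (Finset.mem_Ico.mp hx).2
      have : x ∉ s := fun hxs => hx2 (Finset.mem_filter.mpr ⟨hxs, hxj⟩)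
      simp [hs x this]
    rw [heq]
    exact word_bound F f hd hadm N j
  · have : s.filter (· < j) = ∅ := by
      rw [Finset.not_nonempty_iff_eq_empty.mp hne]; rfl
    rw [this, Finset.sum_empty]
    exact zpow_pos F.bpos j

/-! ### Tail estimates for α-expansions -/

theorem dsum (F : Facts a β α) (w : ℕ → ℤ) (h0 : ∀ n, 0 ≤ w n) (h1 : ∀ n, w n ≤ a) :
    Summable (fun n : ℕ => (w n : ℝ) * α ^ n) := by
  have habs : |α| < 1 := abs_lt.mpr ⟨F.agt, by linarith [F.aneg]⟩
  apply Summable.of_abs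
  apply Summable.of_nonneg_of_le (fun n => abs_nonneg _)
    (f := fun n : ℕ => (a : ℝ) * |α| ^ n)
  · intro n
    rw [abs_mul, abs_pow]
    have h1 : |(w n : ℝ)| ≤ (a : ℝ) := by
      rw [abs_of_nonneg (by exact_mod_cast (h0 n))]
      exact_mod_cast h1 n
    have h2 : (0 : ℝ) ≤ |α| ^ n := pow_nonneg (abs_nonneg _) n
    nlinarith
  · exact (summable_geometric_of_lt_one (abs_nonneg _) habs).mul_left _

theorem summable_ite_even (F : Facts a β α) (c : ℝ) :
    Summable (fun n : ℕ => if Even n then c * α ^ n else 0) := by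
  have habs : |α| < 1 := abs_lt.mpr ⟨F.agt, by linarith [F.aneg]⟩
  apply Summable.of_abs
  apply Summable.of_nonneg_of_le (fun n => abs_nonneg _)
    (f := fun n : ℕ => |c| * |α| ^ n)
  · intro n
    by_cases h : Even n <;> simp [h, abs_mul, abs_pow]
    · positivity
  · exact (summable_geometric_of_lt_one (abs_nonneg _) habs).mul_left _

theorem summable_ite_odd (F : Facts a β α) (c : ℝ) :
    Summable (fun n : ℕ => if Even n then 0 else c * α ^ n) := by
  have habs : |α| < 1 := abs_lt.mpr ⟨F.agt, by linarith [F.aneg]⟩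
  apply Summable.of_abs
  apply Summable.of_nonneg_of_le (fun n => abs_nonneg _)
    (f := fun n : ℕ => |c| * |α| ^ n)
  · intro n
    by_cases h : Even n <;> simp [h, abs_mul, abs_pow]
    · positivity
  · exact (summable_geometric_of_lt_one (abs_nonneg _) habs).mul_left _

theorem asq_lt_one (F : Facts a β α) : α ^ 2 < 1 := by nlinarith [F.agt, F.aneg]

theorem one_sub_asq (F : Facts a β α) : 1 - α ^ 2 = (a : ℝ) * (-α) := by
  have := F.aroot; linarith

theorem tsum_even (F : Facts a β α) :
    (∑' n : ℕ, if Even n then (a : ℝ) * α ^ n else 0) = β := by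
  have hinj : Function.Injective (fun k : ℕ => 2 * k) := fun x y h => by dsimp at h; omega
  have hsupp : Function.support (fun n : ℕ => if Even n then (a : ℝ) * α ^ n else 0)
      ⊆ Set.range (fun k : ℕ => 2 * k) := by
    intro x hx
    by_cases h : Even x
    · obtain ⟨k, hk⟩ := h; exact ⟨k, by dsimp; omega⟩
    · simp [h] at hx
  have h1 := Function.Injective.tsum_eq hinj
    (f := fun n : ℕ => if Even n then (a : ℝ) * α ^ n else 0) hsupp
  rw [← h1]
  have h2 : ∀ k : ℕ, (if Even (2 * k) then (a : ℝ) * α ^ (2 * k) else 0)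
      = (a : ℝ) * (α ^ 2) ^ k := by
    intro k
    rw [if_pos (even_two_mul k), pow_mul]
  rw [tsum_congr h2, tsum_mul_left,
    tsum_geometric_of_lt_one (sq_nonneg α) (asq_lt_one F)]
  rw [show (1 - α ^ 2) = (a : ℝ) * (-α) from one_sub_asq F]
  have hane : (a : ℝ) ≠ 0 := ne_of_gt (by exact_mod_cast F.ha)
  have h3 : α ≠ 0 := F.ane
  field_simp
  linear_combination (-1 : ℝ) * F.hαβ

theorem tsum_odd (F : Facts a β α) :
    (∑' n : ℕ, if Even n then 0 else (a : ℝ) * α ^ n) = -1 := by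
  have hinj : Function.Injective (fun k : ℕ => 2 * k + 1) := fun x y h => by dsimp at h; omega
  have hsupp : Function.support (fun n : ℕ => if Even n then 0 else (a : ℝ) * α ^ n)
      ⊆ Set.range (fun k : ℕ => 2 * k + 1) := by
    intro x hx
    by_cases h : Even x
    · simp [h] at hx
    · obtain ⟨k, hk⟩ := Nat.odd_iff.mpr (Nat.not_even_iff.mp h)
      exact ⟨k, by dsimp; omega⟩
  have h1 := Function.Injective.tsum_eq hinj
    (f := fun n : ℕ => if Even n then 0 else (a : ℝ) * α ^ n) hsupp
  rw [← h1]
  have h2 : ∀ k : ℕ, (if Even (2 * k + 1) then 0 else (a : ℝ) * α ^ (2 * k + 1))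
      = ((a : ℝ) * α) * (α ^ 2) ^ k := by
    intro k
    rw [if_neg (by simp [Nat.even_add_one, Nat.not_even_iff_odd])]
    rw [pow_succ, pow_mul]
    ring
  rw [tsum_congr h2, tsum_mul_left,
    tsum_geometric_of_lt_one (sq_nonneg α) (asq_lt_one F)]
  rw [show (1 - α ^ 2) = (a : ℝ) * (-α) from one_sub_asq F]
  have hane : (a : ℝ) ≠ 0 := ne_of_gt (by exact_mod_cast F.ha)
  have h3 : α ≠ 0 := F.ane
  field_simp

theorem tail_ub (F : Facts a β α) (w : ℕ → ℤ) (h0 : ∀ n, 0 ≤ w n) (h1 : ∀ n, w n ≤ a) :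
    (∑' n : ℕ, (w n : ℝ) * α ^ n) ≤ β := by
  rw [← tsum_even F]
  apply Summable.tsum_le_tsum _ (dsum F w h0 h1) (summable_ite_even F _)
  intro n
  by_cases h : Even n
  · rw [if_pos h]
    have hpow : (0 : ℝ) ≤ α ^ n := h.pow_nonneg α
    have : (w n : ℝ) ≤ (a : ℝ) := by exact_mod_cast h1 n
    nlinarith
  · rw [if_neg h]
    have hpow : α ^ n ≤ 0 := (Nat.odd_iff.mpr (Nat.not_even_iff.mp h)).pow_nonpos F.aneg.le
    have : (0 : ℝ) ≤ (w n : ℝ) := by exact_mod_cast h0 n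
    nlinarith

theorem tail_lb (F : Facts a β α) (w : ℕ → ℤ) (h0 : ∀ n, 0 ≤ w n) (h1 : ∀ n, w n ≤ a) :
    -1 ≤ (∑' n : ℕ, (w n : ℝ) * α ^ n) := by
  rw [← tsum_odd F]
  apply Summable.tsum_le_tsum _ (summable_ite_odd F _) (dsum F w h0 h1)
  intro n
  by_cases h : Even n
  · rw [if_pos h]
    have hpow : (0 : ℝ) ≤ α ^ n := h.pow_nonneg α
    have : (0 : ℝ) ≤ (w n : ℝ) := by exact_mod_cast h0 n
    nlinarith
  · rw [if_neg h]
    have hpow : α ^ n ≤ 0 := (Nat.odd_iff.mpr (Nat.not_even_iff.mp h)).pow_nonpos F.aneg.le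
    have : (w n : ℝ) ≤ (a : ℝ) := by exact_mod_cast h1 n
    nlinarith

theorem tail_split (F : Facts a β α) (w : ℕ → ℤ) (h0 : ∀ n, 0 ≤ w n) (h1 : ∀ n, w n ≤ a) :
    (∑' n : ℕ, (w n : ℝ) * α ^ n) = (w 0 : ℝ) + α * ∑' n : ℕ, (w (n + 1) : ℝ) * α ^ n := by
  rw [Summable.tsum_eq_zero_add (dsum F w h0 h1)]
  simp only [pow_zero, mul_one]
  congr 1
  have h2 : ∀ n : ℕ, (w (n + 1) : ℝ) * α ^ (n + 1) = α * ((w (n + 1) : ℝ) * α ^ n) := by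
    intro n; rw [pow_succ]; ring
  rw [tsum_congr h2, tsum_mul_left]

set_option maxHeartbeats 1000000 in
theorem tail_core (F : Facts a β α) (u v : ℕ → ℤ)
    (hu : ∀ n, 0 ≤ u n ∧ u n ≤ a) (hv : ∀ n, 0 ≤ v n ∧ v n ≤ a)
    (hadu : ∀ n, u (n + 1) = a → u n = 0) (hadv : ∀ n, v (n + 1) = a → v n = 0)
    (hlt : u 0 < v 0)
    (heq : (∑' n : ℕ, (u n : ℝ) * α ^ n) = ∑' n : ℕ, (v n : ℝ) * α ^ n) :
    v 0 = u 0 + 1 ∧ (∑' n : ℕ, (u n : ℝ) * α ^ n) = (u 0 : ℝ) - α := by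
  have hu0 := fun n => (hu n).1
  have hu1 := fun n => (hu n).2
  have hv0 := fun n => (hv n).1
  have hv1 := fun n => (hv n).2
  set P1 := ∑' n : ℕ, (u (n + 1) : ℝ) * α ^ n with hP1def
  set Q1 := ∑' n : ℕ, (v (n + 1) : ℝ) * α ^ n with hQ1def
  set P2 := ∑' n : ℕ, (u (n + 1 + 1) : ℝ) * α ^ n with hP2def
  set Q2 := ∑' n : ℕ, (v (n + 1 + 1) : ℝ) * α ^ n with hQ2def
  set P3 := ∑' n : ℕ, (u (n + 1 + 1 + 1) : ℝ) * α ^ n with hP3def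
  have hP0 : (∑' n : ℕ, (u n : ℝ) * α ^ n) = (u 0 : ℝ) + α * P1 :=
    tail_split F u hu0 hu1
  have hQ0 : (∑' n : ℕ, (v n : ℝ) * α ^ n) = (v 0 : ℝ) + α * Q1 :=
    tail_split F v hv0 hv1
  have hP1s : P1 = (u 1 : ℝ) + α * P2 :=
    tail_split F (fun n => u (n + 1)) (fun n => hu0 _) (fun n => hu1 _)
  have hQ1s : Q1 = (v 1 : ℝ) + α * Q2 :=
    tail_split F (fun n => v (n + 1)) (fun n => hv0 _) (fun n => hv1 _)
  have hP2s : P2 = (u 2 : ℝ) + α * P3 :=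
    tail_split F (fun n => u (n + 1 + 1)) (fun n => hu0 _) (fun n => hu1 _)
  have hP1lb : -1 ≤ P1 := tail_lb F _ (fun n => hu0 _) (fun n => hu1 _)
  have hP1ub : P1 ≤ β := tail_ub F _ (fun n => hu0 _) (fun n => hu1 _)
  have hQ1lb : -1 ≤ Q1 := tail_lb F _ (fun n => hv0 _) (fun n => hv1 _)
  have hQ1ub : Q1 ≤ β := tail_ub F _ (fun n => hv0 _) (fun n => hv1 _)
  have hP2lb : -1 ≤ P2 := tail_lb F _ (fun n => hu0 _) (fun n => hu1 _)
  have hP2ub : P2 ≤ β := tail_ub F _ (fun n => hu0 _) (fun n => hu1 _)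
  have hQ2lb : -1 ≤ Q2 := tail_lb F _ (fun n => hv0 _) (fun n => hv1 _)
  have hQ2ub : Q2 ≤ β := tail_ub F _ (fun n => hv0 _) (fun n => hv1 _)
  have hP3lb : -1 ≤ P3 := tail_lb F _ (fun n => hu0 _) (fun n => hu1 _)
  clear_value P1 Q1 P2 Q2 P3
  have h1 : (u 0 : ℝ) + α * P1 = (v 0 : ℝ) + α * Q1 := by
    rw [← hP0, ← hQ0]; exact heq
  set c : ℤ := v 0 - u 0 with hc
  have hc1 : 1 ≤ c := by omega
  have hcr : (c : ℝ) = (v 0 : ℝ) - (u 0 : ℝ) := by rw [hc]; push_cast; ring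
  have hcβ : (c : ℝ) * β = Q1 - P1 := by
    rw [hcr]
    linear_combination (-β) * h1 + (P1 - Q1) * F.hαβ
  have hcr2 : (c : ℝ) < 2 := by nlinarith [F.b_gt_1]
  have hc2 : c = 1 := by
    have : c < 2 := by exact_mod_cast hcr2
    omega
  have hQP : Q1 - P1 = β := by
    rw [← hcβ, hc2]; norm_num
  set e : ℤ := v 1 - u 1 with he
  have her : (e : ℝ) = (v 1 : ℝ) - (u 1 : ℝ) := by rw [he]; push_cast; ring
  have heq2 : (e : ℝ) + α * (Q2 - P2) = β := by
    rw [her]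
    linear_combination hQP - hQ1s + hP1s
  have hecase : e = a ∨ e ≤ (a : ℤ) - 1 := by
    have h01 := hv1 1; have h02 := hu0 1; omega
  rcases hecase with hea | hea
  · exfalso
    have hv1a : v 1 = a := by have h01 := hv1 1; have h02 := hu0 1; omega
    have hv00 : v 0 = 0 := hadv 0 hv1a
    have h03 := hu0 0
    omega
  · have hear : (e : ℝ) ≤ (a : ℝ) - 1 := by
      have h' : (e : ℝ) ≤ ((a : ℤ) - 1 : ℤ) := by exact_mod_cast hea
      push_cast at h'; linarith
    have hba : β - (a : ℝ) = -α := by linarith [F.hab]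
    -- α(Q2 - P2) = β - e ≥ 1 - α  and  α(Q2 - P2) ≤ 1 - α
    have hge : 1 - α ≤ α * (Q2 - P2) := by linarith
    have hub2 : α * (Q2 - P2) ≤ 1 - α := by nlinarith [F.aneg, F.hαβ]
    have heqa : α * (Q2 - P2) = 1 - α := le_antisymm hub2 hge
    have hQP2 : Q2 - P2 = -(1 + β) := by
      have h2 : α * (Q2 - P2) = α * (-(1 + β)) := by
        rw [heqa]; linear_combination F.hαβ
      exact mul_left_cancel₀ F.ane h2
    have hP2β : P2 = β := by nlinarith
    -- then u 2 = a
    have hu2a : (u 2 : ℝ) ≥ (a : ℝ) := by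
      have hαP3 : α * P3 ≤ -α := by nlinarith [F.aneg]
      have := hP2s
      rw [hP2β] at this
      have h2 : (u (0 + 1 + 1) : ℝ) = (u 2 : ℝ) := by norm_num
      nlinarith [F.hab]
    have hu2 : u 2 = a := by
      have h3 : (a : ℤ) ≤ u 2 := by exact_mod_cast hu2a
      have := hu1 2; omega
    have hu10 : u 1 = 0 := hadu 1 hu2
    have hP1v : P1 = -1 := by
      rw [hP1s, hu10, hP2β]
      push_cast
      linarith [F.hαβ]
    constructor
    · omega
    · rw [hP0, hP1v]; ring

/-! ### Existence -/

theorem exists_expansion (F : Facts a β α) (m n : ℤ) (hx : 0 < (m : ℝ) + n * β) :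
    ∃ (f : ℤ → ℤ) (s : Finset ℤ),
      (∀ i, 0 ≤ f i ∧ f i ≤ a) ∧
      (∀ i, f (i + 1) = a → f i = 0) ∧
      (∀ i ∉ s, f i = 0) ∧
      (∀ γ : ℝ, γ ^ 2 = (a : ℝ) * γ + 1 → γ ≠ 0 →
        (∑ i ∈ s, (f i : ℝ) * γ ^ i) = (m : ℝ) + n * γ) ∧
      (∀ j : ℤ, ∃ P : ℤ × ℤ, ∀ γ : ℝ, γ ^ 2 = (a : ℝ) * γ + 1 → γ ≠ 0 →
        (∑ i ∈ s.filter (· < j), (f i : ℝ) * γ ^ i) + γ ^ j * pval γ P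
          = (m : ℝ) + n * γ) := by
  have ha0 : (0 : ℤ) < (a : ℤ) := by exact_mod_cast F.ha
  set y : ℝ := (m : ℝ) + n * α with hy
  have habs : |α| < 1 := abs_lt.mpr ⟨F.agt, by linarith [F.aneg]⟩
  obtain ⟨k₀, hk₀⟩ := exists_pow_lt_of_lt_one
    (show (0 : ℝ) < 1 / (|y| + 1) by positivity) habs
  have hk₀' : |α| ^ k₀ * |y| < 1 := by
    have h0 : (0 : ℝ) ≤ |y| := abs_nonneg y
    have e : (1 / (|y| + 1)) * (|y| + 1) = 1 := by field_simp
    nlinarith [pow_nonneg (abs_nonneg α) k₀]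
  set p0 : ℤ × ℤ := (pmul a)^[k₀] (m, n) with hp0
  have hvals : ∀ γ : ℝ, γ ^ 2 = (a : ℝ) * γ + 1 → ∀ k : ℕ,
      pval γ ((pmul a)^[k] (m, n)) = γ ^ k * ((m : ℝ) + n * γ) := by
    intro γ hγ k
    induction k with
    | zero => simp [pval]
    | succ k ih =>
      rw [Function.iterate_succ_apply', pval_pmul hγ, ih, pow_succ]
      ring
  set S : ℕ → ℤ × ℤ := fun k => (stp a α)^[k] p0 with hS
  have hSsucc : ∀ k, S (k + 1) = stp a α (S k) := fun k =>
    Function.iterate_succ_apply' _ _ _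
  have hS0 : S 0 = p0 := rfl
  have hG0 : Good β α p0 := by
    have hαv : pval α p0 = α ^ k₀ * y := by rw [hp0, hvals α F.aroot k₀]
    have habs2 : |pval α p0| < 1 := by
      rw [hαv, abs_mul, abs_pow]
      exact hk₀'
    obtain ⟨hl, hr⟩ := abs_lt.mp habs2
    refine ⟨?_, hl, by linarith [F.b_gt_1]⟩
    rw [hp0, hvals β F.root k₀]
    exact mul_pos (pow_pos F.bpos _) hx
  have hGZ : ∀ k, Good β α (S k) ∨ S k = (0, 0) := by
    intro k
    induction k with
    | zero => exact Or.inl hG0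
    | succ k ih =>
      rcases ih with hgd | hz
      · rw [hSsucc]; exact stp_good F hgd
      · rw [hSsucc, hz, stp_zero F]; exact Or.inr rfl
  set D : ℕ → ℤ := fun k => dig α (S k) with hD
  have hDb : ∀ k, 0 ≤ D k ∧ D k ≤ a := by
    intro k
    rcases hGZ k with hgd | hz
    · exact ⟨dig_nonneg _, dig_le F hgd.2.2⟩
    · have : D k = 0 := by rw [hD]; dsimp only; rw [hz, dig_zero F]
      rw [this]
      exact ⟨le_refl 0, by omega⟩
  have htel : ∀ γ : ℝ, γ ^ 2 = (a : ℝ) * γ + 1 → ∀ t : ℕ,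
      pval γ p0 = (∑ k ∈ Finset.range t, (D k : ℝ) * γ ^ k) + γ ^ t * pval γ (S t) := by
    intro γ hγ t
    induction t with
    | zero => simp [hS0]
    | succ t ih =>
      rw [Finset.sum_range_succ, hSsucc]
      have hst := pval_stp (α := α) hγ (S t)
      rw [ih, hst, pow_succ]
      ring
  have hnn : ∀ k, 0 ≤ pval β (S k) := by
    intro k
    rcases hGZ k with hgd | hz
    · exact le_of_lt hgd.1
    · rw [hz]; simp [pval]
  have hdec : ∀ k, β ^ k * pval β (S k) ≤ pval β p0 := by
    intro k
    induction k with
    | zero => simp [hS0]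
    | succ k ih =>
      have hst := pval_stp (α := α) F.root (S k)
      rw [← hSsucc] at hst
      have hd0 : (0 : ℝ) ≤ (D k : ℝ) := by exact_mod_cast (hDb k).1
      have hdig : (D k : ℝ) = (dig α (S k) : ℝ) := by rw [hD]
      have h1 : β * pval β (S (k + 1)) ≤ pval β (S k) := by
        rw [hst]; rw [← hdig]; linarith
      calc β ^ (k + 1) * pval β (S (k + 1)) = β ^ k * (β * pval β (S (k + 1))) := by ring
        _ ≤ β ^ k * pval β (S k) :=
            mul_le_mul_of_nonneg_left h1 (pow_nonneg F.bpos.le k)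
        _ ≤ pval β p0 := ih
  obtain ⟨K, hK⟩ := pow_unbounded_of_one_lt (β * pval β p0) F.b_gt_1
  have hSK : S K = (0, 0) := by
    by_contra hc
    have hgd : Good β α (S K) := (hGZ K).resolve_right hc
    have h1 : 1 < β * pval β (S K) := pval_lb F hc hgd.2.1 hgd.2.2 (hnn K)
    have h2 := hdec K
    have h3 : (0 : ℝ) < β ^ K := pow_pos F.bpos K
    nlinarith [mul_le_mul_of_nonneg_left h2 F.bpos.le,
      mul_lt_mul_of_pos_left h1 h3]
  have habsorb : ∀ t, K ≤ t → S t = (0, 0) := by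
    intro t
    induction t with
    | zero =>
      intro ht
      have h0 : (0 : ℕ) = K := by omega
      rw [h0]; exact hSK
    | succ t ih =>
      intro ht
      rcases Nat.lt_or_ge K (t + 1) with h | h
      · rw [hSsucc, ih (by omega), stp_zero F]
      · have : K = t + 1 := by omega
        rw [← this]; exact hSK
  have hDzero : ∀ t, K ≤ t → D t = 0 := by
    intro t ht
    rw [hD]; dsimp only; rw [habsorb t ht, dig_zero F]
  -- the expansion
  set f : ℤ → ℤ := fun i => if 0 ≤ i + k₀ then D (i + k₀).toNat else 0 with hf
  set s : Finset ℤ := Finset.Ico (-(k₀ : ℤ)) ((K : ℤ) - k₀) with hsdef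
  have hdig : ∀ i, 0 ≤ f i ∧ f i ≤ a := by
    intro i
    rw [hf]; dsimp only
    by_cases h : 0 ≤ i + k₀
    · rw [if_pos h]; exact hDb _
    · rw [if_neg h]; exact ⟨le_refl 0, by omega⟩
  have hsupp : ∀ i ∉ s, f i = 0 := by
    intro i hi
    rw [hsdef] at hi
    simp only [Finset.mem_Ico, not_and, not_lt] at hi
    rw [hf]; dsimp only
    by_cases h : 0 ≤ i + k₀
    · rw [if_pos h]
      apply hDzero
      have := hi (by omega)
      omega
    · rw [if_neg h]
  have hfD : ∀ k : ℕ, f ((k : ℤ) - k₀) = D k := by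
    intro k
    rw [hf]; dsimp only
    rw [if_pos (by omega)]
    congr 1
    omega
  have hadm : ∀ i, f (i + 1) = (a : ℤ) → f i = 0 := by
    intro i hfa
    by_cases h1 : 0 ≤ i + 1 + k₀
    · by_cases h2 : 0 ≤ i + k₀
      · rw [hf] at hfa ⊢; dsimp only at hfa ⊢
        rw [if_pos h1] at hfa
        rw [if_pos h2]
        set t := (i + k₀).toNat with htdef
        have htt : (i + 1 + k₀).toNat = t + 1 := by omega
        rw [htt] at hfa
        by_contra hD0
        have hd1 : 1 ≤ D t := by have := (hDb t).1; omega
        rcases hGZ t with hgd | hz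
        · refine adm_step F hgd hd1 ?_ ?_
          · rw [← hSsucc]; exact hGZ (t + 1)
          · rw [← hSsucc]; exact hfa
        · rw [hD] at hD0; dsimp only at hD0
          rw [hz, dig_zero F] at hD0
          exact hD0 rfl
      · rw [hf]; dsimp only; rw [if_neg h2]
    · exfalso
      rw [hf] at hfa; dsimp only at hfa
      rw [if_neg h1] at hfa
      omega
  have hinjk : Function.Injective (fun k : ℕ => (k : ℤ) - k₀) := fun x y hxy => by
          simp only at hxy; omega
  have hmapgen : ∀ t : ℕ, Finset.Ico (-(k₀ : ℤ)) ((t : ℤ) - k₀)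
      = (Finset.range t).map ⟨fun k : ℕ => (k : ℤ) - k₀, hinjk⟩ := by
    intro t
    ext i
    simp only [Finset.mem_Ico, Finset.mem_map, Finset.mem_range,
      Function.Embedding.coeFn_mk]
    constructor
    · rintro ⟨h1, h2⟩
      exact ⟨(i + k₀).toNat, by omega, by omega⟩
    · rintro ⟨k, hk, rfl⟩
      omega
  have hsum_range : ∀ (t : ℕ) (γ : ℝ), γ ^ 2 = (a : ℝ) * γ + 1 → γ ≠ 0 →
      (∑ i ∈ Finset.Ico (-(k₀ : ℤ)) ((t : ℤ) - k₀), (f i : ℝ) * γ ^ i)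
        = (∑ k ∈ Finset.range t, (D k : ℝ) * γ ^ k) / γ ^ k₀ := by
    intro t γ hγ hγne
    rw [hmapgen t, Finset.sum_map]
    simp only [Function.Embedding.coeFn_mk]
    have hterm : ∀ x ∈ Finset.range t, (f ((x : ℤ) - k₀) : ℝ) * γ ^ ((x : ℤ) - k₀)
        = (D x : ℝ) * γ ^ (x : ℕ) / γ ^ k₀ := by
      intro x _
      rw [hfD x, zpow_sub₀ hγne, zpow_natCast, zpow_natCast]
      ring
    rw [Finset.sum_congr rfl hterm, ← Finset.sum_div]
  have hp0val : ∀ γ : ℝ, γ ^ 2 = (a : ℝ) * γ + 1 →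
      pval γ p0 = γ ^ k₀ * ((m : ℝ) + n * γ) := by
    intro γ hγ; rw [hp0, hvals γ hγ k₀]
  have htel0 : ∀ (t : ℕ) (γ : ℝ), γ ^ 2 = (a : ℝ) * γ + 1 →
      (∑ k ∈ Finset.range t, (D k : ℝ) * γ ^ k)
        = γ ^ k₀ * ((m : ℝ) + n * γ) - γ ^ t * pval γ (S t) := by
    intro t γ hγ
    have := htel γ hγ t
    rw [hp0val γ hγ] at this
    linarith
  refine ⟨f, s, hdig, hadm, hsupp, ?_, ?_⟩
  · -- total sum
    intro γ hγ hγne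
    have h1 : s = Finset.Ico (-(k₀ : ℤ)) ((K : ℤ) - k₀) := hsdef
    rw [h1, hsum_range K γ hγ hγne, htel0 K γ hγ, hSK]
    simp only [pval, Int.cast_zero, zero_mul, add_zero, mul_zero, sub_zero]
    field_simp
  · -- partial sums
    intro j
    by_cases hj : 0 ≤ j + k₀
    · refine ⟨S (j + k₀).toNat, ?_⟩
      intro γ hγ hγne
      set t : ℕ := (j + k₀).toNat with htdef
      have hjt : (t : ℤ) - k₀ = j := by omega
      have hfil : s.filter (· < j) = Finset.Ico (-(k₀ : ℤ)) (min ((K : ℤ) - k₀) j) := by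
        ext i
        simp only [hsdef, Finset.mem_filter, Finset.mem_Ico, lt_min_iff]
        tauto
      have hsub : (∑ i ∈ s.filter (· < j), (f i : ℝ) * γ ^ i)
          = ∑ i ∈ Finset.Ico (-(k₀ : ℤ)) ((t : ℤ) - k₀), (f i : ℝ) * γ ^ i := by
        rw [hjt, hfil]
        rcases le_or_gt ((K : ℤ) - k₀) j with h | h
        · rw [min_eq_left h]
          refine Finset.sum_subset (Finset.Ico_subset_Ico le_rfl h) ?_
          intro x hx hx2
          have : f x = 0 := by
            apply hsupp
            rw [hsdef]
            simp only [Finset.mem_Ico] at hx hx2 ⊢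
            omega
          simp [this]
        · rw [min_eq_right h.le]
      rw [hsub, hsum_range t γ hγ hγne, htel0 t γ hγ]
      have hγk : γ ^ k₀ ≠ 0 := pow_ne_zero _ hγne
      have hγj : γ ^ j = γ ^ (t : ℤ) / γ ^ (k₀ : ℤ) := by
        rw [← zpow_sub₀ hγne]
        rw [show (t : ℤ) - (k₀ : ℤ) = j from hjt]
      rw [hγj, zpow_natCast, zpow_natCast]
      field_simp
      ring
    · refine ⟨(pmul a)^[(-j).toNat] (m, n), ?_⟩
      intro γ hγ hγne
      have hfil : s.filter (· < j) = ∅ := by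
        rw [Finset.filter_eq_empty_iff]
        intro i hi
        rw [hsdef] at hi
        simp only [Finset.mem_Ico] at hi
        omega
      rw [hfil, Finset.sum_empty, hvals γ hγ, zero_add]
      have h2 : γ ^ ((-j).toNat : ℕ) = γ ^ ((-j) : ℤ) := by
        rw [← zpow_natCast γ ((-j).toNat)]
        congr 1
        omega
      rw [h2, ← mul_assoc, ← zpow_add₀ hγne]
      simp

/-! ### Uniqueness -/

theorem tail_formula (F : Facts a β α) (m n : ℤ) (f h : ℤ → ℤ) (s : Finset ℤ)
    (hfs : ∀ i ∉ s, f i = 0) (j : ℤ)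
    (hh : HasSum (fun i : ℤ => (h i : ℝ) * α ^ i) ((m : ℝ) + n * α))
    (hagree : ∀ i, i < j → h i = f i) :
    (m : ℝ) + n * α = (∑ i ∈ s.filter (· < j), (f i : ℝ) * α ^ i)
      + α ^ j * ∑' k : ℕ, (h (j + k) : ℝ) * α ^ k := by
  have hsm : Summable (fun i : ℤ => (h i : ℝ) * α ^ i) := hh.summable
  have htot : (∑' i : ℤ, (h i : ℝ) * α ^ i) = (m : ℝ) + n * α := hh.tsum_eq
  have hsplit := hsm.tsum_subtype_add_tsum_subtype_compl (Set.Iio j)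
  have h1 : (∑' x : ↑(Set.Iio j), (h (x : ℤ) : ℝ) * α ^ (x : ℤ))
      = ∑ i ∈ s.filter (· < j), (f i : ℝ) * α ^ i := by
    rw [tsum_subtype (Set.Iio j) (fun i : ℤ => (h i : ℝ) * α ^ i)]
    refine (tsum_eq_sum ?_).trans (Finset.sum_congr rfl ?_)
    · intro b hb
      by_cases hbj : b < j
      · rw [Set.indicator_of_mem (show b ∈ Set.Iio j from hbj)]
        have hfb : f b = 0 := hfs b (fun hbs => hb (Finset.mem_filter.mpr ⟨hbs, hbj⟩))
        rw [hagree b hbj, hfb]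
        simp
      · exact Set.indicator_of_notMem (show b ∉ Set.Iio j from hbj) _
    · intro i hi
      rw [Set.indicator_of_mem (show i ∈ Set.Iio j from (Finset.mem_filter.mp hi).2)]
      rw [hagree i (Finset.mem_filter.mp hi).2]
  have h2 : (∑' x : ↑(Set.Iio j)ᶜ, (h (x : ℤ) : ℝ) * α ^ (x : ℤ))
      = α ^ j * ∑' k : ℕ, (h (j + k) : ℝ) * α ^ k := by
    rw [show (Set.Iio j)ᶜ = Set.Ici j from Set.compl_Iio,
      tsum_subtype (Set.Ici j) (fun i : ℤ => (h i : ℝ) * α ^ i)]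
    have hinj : Function.Injective (fun k : ℕ => j + (k : ℤ)) := by
      intro x y hxy; dsimp at hxy; omega
    have hsupp : Function.support
        ((Set.Ici j).indicator (fun i : ℤ => (h i : ℝ) * α ^ i))
          ⊆ Set.range (fun k : ℕ => j + (k : ℤ)) := by
      intro x hx
      have hxj : x ∈ Set.Ici j := by
        by_contra hc
        exact hx (Set.indicator_of_notMem hc _)
      exact ⟨(x - j).toNat, by dsimp; simp only [Set.mem_Ici] at hxj; omega⟩
    rw [← Function.Injective.tsum_eq hinj hsupp]
    have h3 : ∀ k : ℕ, (Set.Ici j).indicator (fun i : ℤ => (h i : ℝ) * α ^ i) (j + (k : ℤ))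
        = α ^ j * ((h (j + (k : ℤ)) : ℝ) * α ^ k) := by
      intro k
      rw [Set.indicator_of_mem (show j + (k : ℤ) ∈ Set.Ici j by simp)]
      rw [zpow_add₀ F.ane j (k : ℤ), zpow_natCast]
      ring
    rw [tsum_congr h3, tsum_mul_left]
  rw [← htot, ← hsplit, h1, h2]

theorem g_eq_f (F : Facts a β α) (m n : ℤ) (hx : 0 < (m : ℝ) + n * β)
    (f : ℤ → ℤ) (s : Finset ℤ)
    (hfd : ∀ i, 0 ≤ f i ∧ f i ≤ a) (hfadm : ∀ i, f (i + 1) = a → f i = 0)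
    (hfs : ∀ i ∉ s, f i = 0)
    (hfsum : HasSum (fun i : ℤ => (f i : ℝ) * α ^ i) ((m : ℝ) + n * α))
    (hpart : ∀ j : ℤ, ∃ P : ℤ × ℤ, ∀ γ : ℝ, γ ^ 2 = (a : ℝ) * γ + 1 → γ ≠ 0 →
        (∑ i ∈ s.filter (· < j), (f i : ℝ) * γ ^ i) + γ ^ j * pval γ P
          = (m : ℝ) + n * γ)
    (g : ℤ → ℤ) (hg : IsAlphaAdicExpansion a α g ((m : ℝ) + n * α)) : g = f := by
  obtain ⟨hgd, ⟨kg, hkg⟩, hgadm, hgsum⟩ := hg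
  by_contra hne
  obtain ⟨i₀, hi₀⟩ := Function.ne_iff.mp hne
  have hflow : ∃ b : ℤ, ∀ i, i < b → f i = 0 := by
    by_cases hne' : s.Nonempty
    · exact ⟨s.min' hne', fun i hi =>
        hfs i (fun hmem => absurd (s.min'_le i hmem) (by omega))⟩
    · exact ⟨0, fun i _ => hfs i (by simp [Finset.not_nonempty_iff_eq_empty.mp hne'])⟩
  obtain ⟨kf, hkf⟩ := hflow
  have hbdd : ∀ z : ℤ, g z ≠ f z → min kg kf ≤ z := by
    intro z hz
    by_contra hc
    push_neg at hc
    exact hz (by rw [hkg z (by omega), hkf z (by omega)])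
  obtain ⟨j, hj, hjle⟩ := Int.exists_least_of_bdd ⟨min kg kf, hbdd⟩ ⟨i₀, hi₀⟩
  have hagree : ∀ i, i < j → g i = f i := by
    intro i hi
    by_contra hcon
    exact absurd (hjle i hcon) (by omega)
  have Ef := tail_formula F m n f f s hfs j hfsum (fun i _ => rfl)
  have Eg := tail_formula F m n f g s hfs j hgsum hagree
  have hαj : (α : ℝ) ^ j ≠ 0 := zpow_ne_zero j F.ane
  have hTT : (∑' k : ℕ, (g (j + (k : ℤ)) : ℝ) * α ^ k)
      = ∑' k : ℕ, (f (j + (k : ℤ)) : ℝ) * α ^ k := by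
    have h2 : α ^ j * (∑' k : ℕ, (g (j + (k : ℤ)) : ℝ) * α ^ k)
        = α ^ j * ∑' k : ℕ, (f (j + (k : ℤ)) : ℝ) * α ^ k := by
      have := Ef.symm.trans Eg
      linarith
    exact mul_left_cancel₀ hαj h2
  have hcore : ∃ c : ℤ, 0 ≤ c ∧ c + 1 ≤ (a : ℤ) ∧
      (∑' k : ℕ, (f (j + (k : ℤ)) : ℝ) * α ^ k) = (c : ℝ) - α := by
    rcases hj.lt_or_gt with hlt | hlt
    · -- g j < f j
      have hcor := tail_core F (fun k : ℕ => g (j + (k : ℤ))) (fun k : ℕ => f (j + (k : ℤ)))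
        (fun k => hgd _) (fun k => hfd _)
        (fun k hk => hgadm (j + (k : ℤ))
          (by rw [show j + (k : ℤ) + 1 = j + ((k + 1 : ℕ) : ℤ) from by push_cast; ring]
              exact hk))
        (fun k hk => hfadm (j + (k : ℤ))
          (by rw [show j + (k : ℤ) + 1 = j + ((k + 1 : ℕ) : ℤ) from by push_cast; ring]
              exact hk))
        (by simpa using hlt)
        hTT
      obtain ⟨h1, h2⟩ := hcor
      have h1' : f j = g j + 1 := by simpa using h1
      have h2' : (∑' k : ℕ, (g (j + (k : ℤ)) : ℝ) * α ^ k) = (g j : ℝ) - α := by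
        simpa using h2
      refine ⟨g j, (hgd j).1, ?_, by rw [← hTT]; exact h2'⟩
      have := (hfd j).2
      omega
    · -- f j < g j
      have hcor := tail_core F (fun k : ℕ => f (j + (k : ℤ))) (fun k : ℕ => g (j + (k : ℤ)))
        (fun k => hfd _) (fun k => hgd _)
        (fun k hk => hfadm (j + (k : ℤ))
          (by rw [show j + (k : ℤ) + 1 = j + ((k + 1 : ℕ) : ℤ) from by push_cast; ring]
              exact hk))
        (fun k hk => hgadm (j + (k : ℤ))
          (by rw [show j + (k : ℤ) + 1 = j + ((k + 1 : ℕ) : ℤ) from by push_cast; ring]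
              exact hk))
        (by simpa using hlt)
        hTT.symm
      obtain ⟨h1, h2⟩ := hcor
      have h1' : g j = f j + 1 := by simpa using h1
      have h2' : (∑' k : ℕ, (f (j + (k : ℤ)) : ℝ) * α ^ k) = (f j : ℝ) - α := by
        simpa using h2
      refine ⟨f j, (hfd j).1, ?_, h2'⟩
      have := (hgd j).2
      omega
  obtain ⟨c, hc0, hca, hcval⟩ := hcore
  obtain ⟨P, hP⟩ := hpart j
  have hPα := hP α F.aroot F.ane
  have hPβ := hP β F.root F.bne
  have h4 : pval α P = (c : ℝ) - α := by
    rw [hcval] at Ef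
    have h5 : α ^ j * pval α P = α ^ j * ((c : ℝ) - α) := by linarith
    exact mul_left_cancel₀ hαj h5
  have h5 : ((P.1 - c : ℤ) : ℝ) + ((P.2 + 1 : ℤ) : ℝ) * α = 0 := by
    have h6 : (P.1 : ℝ) + (P.2 : ℝ) * α = (c : ℝ) - α := h4
    push_cast
    linarith
  obtain ⟨e1, e2⟩ := F.indep_a h5
  have h6 : pval β P = (c : ℝ) - β := by
    have hP1 : P.1 = c := by omega
    have hP2 : P.2 = -1 := by omega
    simp only [pval, hP1, hP2]
    push_cast
    ring
  rw [h6] at hPβ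
  have hW : (∑ i ∈ s.filter (· < j), (f i : ℝ) * β ^ i) < β ^ j :=
    word_bound' F f hfd hfadm s hfs j
  have hzj : (0 : ℝ) < β ^ j := zpow_pos F.bpos j
  have hcaR : (c : ℝ) + 1 ≤ (a : ℝ) := by exact_mod_cast hca
  have h8 : (1 + (c : ℝ) - β) < 0 := by linarith [F.b_gt_a]
  have h9 : β ^ j * (1 + (c : ℝ) - β) < 0 := mul_neg_of_pos_of_neg hzj h8
  have h10 : β ^ j * (1 + (c : ℝ) - β) = β ^ j + β ^ j * ((c : ℝ) - β) := by ring
  linarith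

end AlphaAdicAux

open AlphaAdicAux in
/-- Let β be the positive root of x² - ax - 1 (a ∈ ℤ_{>0}) and
α = -β⁻¹ its conjugate.  If x = m + nβ ∈ ℤ[β] is positive, then its conjugate
x' = m + nα has a unique weakly admissible α-adic expansion; this expansion is
finite and coincides digit-by-digit with the (greedy) β-expansion of x, i.e. it
also represents x in base β and satisfies the greedy tail condition. -/
theorem unique_expansion_of_positive (a : ℕ) (ha : 0 < a) (β α : ℝ)
    (hβroot : β ^ 2 = a * β + 1) (hβpos : 0 < β) (hα : α = -β⁻¹)
    (m n : ℤ) (hxpos : 0 < (m : ℝ) + n * β) :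
    ∃ f : ℤ → ℤ,
      IsAlphaAdicExpansion a α f ((m : ℝ) + n * α) ∧
      (Function.support f).Finite ∧
      HasSum (fun i : ℤ => (f i : ℝ) * β ^ i) ((m : ℝ) + n * β) ∧
      (∀ j : ℤ, ∑' i : {i : ℤ // i < j}, (f i : ℝ) * β ^ (i : ℤ) < β ^ j) ∧
      ∀ g : ℤ → ℤ, IsAlphaAdicExpansion a α g ((m : ℝ) + n * α) → g = f := by
  have F : Facts a β α := facts_mk a ha β α hβroot hβpos hα
  obtain ⟨f, s, hfd, hfadm, hfs, hsum, hpart⟩ := exists_expansion F m n hxpos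
  have hαroot : α ^ 2 = (a : ℝ) * α + 1 := F.aroot
  have hαne : α ≠ 0 := F.ane
  have hβne : β ≠ 0 := F.bne
  have hsumβ : HasSum (fun i : ℤ => (f i : ℝ) * β ^ i) ((m : ℝ) + n * β) := by
    have h0 : ∀ i ∉ s, (f i : ℝ) * β ^ i = 0 := fun i hi => by simp [hfs i hi]
    have : HasSum (fun i : ℤ => (f i : ℝ) * β ^ i) (∑ i ∈ s, (f i : ℝ) * β ^ i) :=
      hasSum_sum_of_ne_finset_zero h0
    rwa [hsum β F.root hβne] at this
  have hsumα : HasSum (fun i : ℤ => (f i : ℝ) * α ^ i) ((m : ℝ) + n * α) := by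
    have h0 : ∀ i ∉ s, (f i : ℝ) * α ^ i = 0 := fun i hi => by simp [hfs i hi]
    have : HasSum (fun i : ℤ => (f i : ℝ) * α ^ i) (∑ i ∈ s, (f i : ℝ) * α ^ i) :=
      hasSum_sum_of_ne_finset_zero h0
    rwa [hsum α hαroot hαne] at this
  have hlow : ∃ k : ℤ, ∀ i, i < k → f i = 0 := by
    by_cases hne : s.Nonempty
    · exact ⟨s.min' hne, fun i hi => hfs i (fun hmem => absurd (s.min'_le i hmem) (by omega))⟩
    · exact ⟨0, fun i _ => hfs i (by simp [Finset.not_nonempty_iff_eq_empty.mp hne])⟩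
  have htsum_eq : ∀ j : ℤ, (∑' i : {i : ℤ // i < j}, (f i : ℝ) * β ^ (i : ℤ))
      = ∑ i ∈ s.filter (· < j), (f i : ℝ) * β ^ i := by
    intro j
    rw [show (∑' i : {i : ℤ // i < j}, (f i : ℝ) * β ^ (i : ℤ))
        = ∑' i : (Set.Iio j), (f (i : ℤ) : ℝ) * β ^ (i : ℤ) from rfl,
      tsum_subtype (Set.Iio j) (fun i : ℤ => (f i : ℝ) * β ^ i)]
    refine (tsum_eq_sum ?_).trans (Finset.sum_congr rfl ?_)
    · intro b hb
      by_cases hbj : b < j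
      · rw [Set.indicator_of_mem (show b ∈ Set.Iio j from hbj)]
        have : f b = 0 := hfs b (fun hbs => hb (Finset.mem_filter.mpr ⟨hbs, hbj⟩))
        simp [this]
      · exact Set.indicator_of_notMem (show b ∉ Set.Iio j from hbj) _
    · intro i hi
      exact Set.indicator_of_mem (show i ∈ Set.Iio j from (Finset.mem_filter.mp hi).2) _
  refine ⟨f, ⟨hfd, hlow, hfadm, hsumα⟩, ?_, hsumβ, ?_, ?_⟩
  · exact Set.Finite.subset s.finite_toSet
      (fun i hi => by by_contra h; exact hi (hfs i h))
  · intro j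
    rw [htsum_eq j]
    exact word_bound' F f hfd hfadm s hfs j
  · intro g hg
    exact g_eq_f F m n hxpos f s hfd hfadm hfs hsumα hpart g hg
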